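/- Every one-way LQICC map, i.e., a CPTP map of the form Σ_i E_i^A ⊗ Ẽ_i^B where {E_i^A} is a quantum instrument on A (each E_i completely positive and Σ_i E_i trace-preserving) and each Ẽ_i^B is an incoherent CPTP map on B, is QI-preserving. -/

import Mathlib

open Matrix Finset
open scoped Kronecker ComplexOrder

/-- A density operator: positive semidefinite with unit trace. -/
def IsDensity {n : Type*} [Fintype n] (ρ : Matrix n n ℂ) : Prop :=
  ρ.PosSemidef ∧ ρ.trace = 1

/-- A quantum-incoherent (QI) state on a bipartite system with quantum part `Q`
and incoherent part `B` (with its fixed reference basis): a state of the form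
`∑ j, p j • ρ j ⊗ |j⟩⟨j|`. -/
def IsQI {Q B : Type*} [Fintype Q] [Fintype B] [DecidableEq B]
    (σ : Matrix (Q × B) (Q × B) ℂ) : Prop :=
  ∃ (p : B → ℝ) (ρ : B → Matrix Q Q ℂ),
    (∀ j, 0 ≤ p j) ∧ (∑ j, p j = 1) ∧ (∀ j, IsDensity (ρ j)) ∧
    σ = ∑ j, (p j : ℂ) • (ρ j ⊗ₖ Matrix.single j j 1)

/-- An incoherent state: a density operator diagonal in the reference basis. -/
def IsIncoherent {n : Type*} [Fintype n] (σ : Matrix n n ℂ) : Prop :=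
  IsDensity σ ∧ ∀ x y, x ≠ y → σ x y = 0

/-- The extension `id_k ⊗ E` of a linear map on matrices. -/
def tensId {n m : Type*} (k : Type*)
    (E : Matrix n n ℂ →ₗ[ℂ] Matrix m m ℂ) :
    Matrix (k × n) (k × n) ℂ →ₗ[ℂ] Matrix (k × m) (k × m) ℂ where
  toFun X := Matrix.of fun p q => E (Matrix.of fun a b => X (p.1, a) (q.1, b)) p.2 q.2
  map_add' X Y := by
    ext p q
    show E (Matrix.of fun a b => (X + Y) (p.1, a) (q.1, b)) p.2 q.2 = _
    rw [show (Matrix.of fun a b => (X + Y) (p.1, a) (q.1, b)) =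
        (Matrix.of fun a b => X (p.1, a) (q.1, b)) +
        (Matrix.of fun a b => Y (p.1, a) (q.1, b)) from rfl, map_add]
    rfl
  map_smul' c X := by
    ext p q
    show E (Matrix.of fun a b => (c • X) (p.1, a) (q.1, b)) p.2 q.2 = _
    rw [show (Matrix.of fun a b => (c • X) (p.1, a) (q.1, b)) =
        c • (Matrix.of fun a b => X (p.1, a) (q.1, b)) from rfl, _root_.map_smul]
    rfl

/-- Complete positivity: `id_k ⊗ E` preserves positive semidefiniteness for all `k`. -/
def IsCompletelyPositive {n m : Type*} [Fintype n] [Fintype m]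
    (E : Matrix n n ℂ →ₗ[ℂ] Matrix m m ℂ) : Prop :=
  ∀ (k : ℕ) (X : Matrix (Fin k × n) (Fin k × n) ℂ), X.PosSemidef →
    ((tensId (Fin k) E) X).PosSemidef

/-- A completely positive trace-preserving (CPTP) linear map. -/
def IsCPTP {n m : Type*} [Fintype n] [Fintype m]
    (E : Matrix n n ℂ →ₗ[ℂ] Matrix m m ℂ) : Prop :=
  IsCompletelyPositive E ∧ ∀ X, (E X).trace = X.trace

/-- The basis density operators `ρ_{a,b}` built from the reference basis. -/
noncomputable def rhoBasis (D : ℕ) (a b : Fin D) : Matrix (Fin D) (Fin D) ℂ :=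
  if a = b then Matrix.single a a 1
  else if (a : ℕ) < b then
    (1 / 2 : ℂ) • (Matrix.single a a 1 + Matrix.single a b 1 +
      Matrix.single b a 1 + Matrix.single b b 1)
  else
    (1 / 2 : ℂ) • (Matrix.single a a 1 + (-Complex.I) • Matrix.single a b 1 +
      Complex.I • Matrix.single b a 1 + Matrix.single b b 1)

/-- The incoherent Kraus operator `K = ∑ j, c j • |f j⟩⟨j|`. -/
noncomputable def krausOf (D : ℕ) (c : Fin D → ℂ) (f : Fin D → Fin D) : Matrix (Fin D) (Fin D) ℂ :=
  ∑ j, c j • Matrix.single (f j) j 1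

/-- An incoherent CPTP operation on `B`: it admits a Kraus decomposition into incoherent
Kraus operators `K_k = ∑ j, c_k(j) |f_k(j)⟩⟨j|` with `∑ k, K_k† K_k = I`. -/
def IsIncoherentOp (DB : ℕ)
    (G : Matrix (Fin DB) (Fin DB) ℂ →ₗ[ℂ] Matrix (Fin DB) (Fin DB) ℂ) : Prop :=
  ∃ (N : ℕ) (c : Fin N → Fin DB → ℂ) (f : Fin N → Fin DB → Fin DB),
    (∑ k, (krausOf DB (c k) (f k))ᴴ * krausOf DB (c k) (f k) = 1) ∧
    ∀ X, G X = ∑ k, krausOf DB (c k) (f k) * X * (krausOf DB (c k) (f k))ᴴ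

/-- The tensor product `F ⊗ G` of superoperators on `A` and `B`, acting on `AB`. -/
noncomputable def mapTensor (DA DB : ℕ)
    (F : Matrix (Fin DA) (Fin DA) ℂ →ₗ[ℂ] Matrix (Fin DA) (Fin DA) ℂ)
    (G : Matrix (Fin DB) (Fin DB) ℂ →ₗ[ℂ] Matrix (Fin DB) (Fin DB) ℂ) :
    Matrix (Fin DA × Fin DB) (Fin DA × Fin DB) ℂ →ₗ[ℂ]
    Matrix (Fin DA × Fin DB) (Fin DA × Fin DB) ℂ where
  toFun X := ∑ x : (Fin DA × Fin DB) × (Fin DA × Fin DB),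
    X x.1 x.2 • (F (Matrix.single x.1.1 x.2.1 1) ⊗ₖ
      G (Matrix.single x.1.2 x.2.2 1))
  map_add' X Y := by
    simp [Matrix.add_apply, add_smul, Finset.sum_add_distrib]
  map_smul' c X := by
    simp [Matrix.smul_apply, smul_smul, Finset.smul_sum]

section AuxLemmas

lemma psd_real_smul {n : Type*} [Fintype n] {M : Matrix n n ℂ} (hM : M.PosSemidef)
    {r : ℝ} (hr : 0 ≤ r) : ((r:ℂ) • M).PosSemidef := by
  refine .of_dotProduct_mulVec_nonneg ?_ ?_
  · show ((r:ℂ) • M)ᴴ = _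
    rw [conjTranspose_smul, hM.1]
    norm_num
  · intro x
    rw [smul_mulVec, dotProduct_smul]
    exact smul_nonneg (by exact_mod_cast hr) (hM.dotProduct_mulVec_nonneg x)

lemma psd_trace_nonneg {n : Type*} [Fintype n] [DecidableEq n] {M : Matrix n n ℂ}
    (hM : M.PosSemidef) : 0 ≤ M.trace := by
  refine Finset.sum_nonneg fun i _ => ?_
  have := hM.dotProduct_mulVec_nonneg (Pi.single i 1)
  simpa [dotProduct, mulVec, Pi.single_apply, Matrix.diag] using this

lemma psd_trace_zero {n : Type*} [Fintype n] {M : Matrix n n ℂ}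
    (hM : M.PosSemidef) (h : M.trace = 0) : M = 0 := by
  classical
  exact hM.trace_eq_zero_iff.mp h

lemma psd_sum {ι n : Type*} [Fintype n] (s : Finset ι) (g : ι → Matrix n n ℂ)
    (h : ∀ i ∈ s, (g i).PosSemidef) : (∑ i ∈ s, g i).PosSemidef := by
  classical
  induction s using Finset.induction with
  | empty => simpa using Matrix.PosSemidef.zero
  | insert _ _ hx ih =>
    rw [Finset.sum_insert hx]
    exact ((h _ (by simp)).add (ih fun i hi => h i (by simp [hi])))

lemma cp_psd {n m : Type*} [Fintype n] [Fintype m]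
    {E : Matrix n n ℂ →ₗ[ℂ] Matrix m m ℂ} (hE : IsCompletelyPositive E)
    {X : Matrix n n ℂ} (hX : X.PosSemidef) : (E X).PosSemidef := by
  have h1 := hE 1 (X.submatrix Prod.snd Prod.snd) (hX.submatrix _)
  have heq : tensId (Fin 1) E (X.submatrix Prod.snd Prod.snd)
      = (E X).submatrix Prod.snd Prod.snd := by
    ext p q
    show E (Matrix.of fun a b => X.submatrix Prod.snd Prod.snd (p.1,a) (q.1,b)) p.2 q.2 = _
    rfl
  rw [heq] at h1
  let e : Fin 1 × m ≃ m := ⟨Prod.snd, fun x => (0,x),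
    fun p => Prod.ext (Subsingleton.elim _ _) rfl, fun x => rfl⟩
  exact (Matrix.posSemidef_submatrix_equiv e).mp h1

lemma stdBasis_conjT {D : ℕ} (i j : Fin D) :
    (Matrix.single i j (1:ℂ))ᴴ = Matrix.single j i 1 := by
  ext a b
  simp [Matrix.single, conjTranspose_apply, and_comm]

lemma krausOf_apply (D : ℕ) (c : Fin D → ℂ) (f : Fin D → Fin D) (a j : Fin D) :
    krausOf D c f a j = if f j = a then c j else 0 := by
  simp only [krausOf, Matrix.sum_apply, Matrix.smul_apply, Matrix.single,
    Matrix.of_apply, smul_eq_mul, mul_ite, mul_one, mul_zero, ite_and]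
  rw [Finset.sum_eq_single j (fun t _ ht => by simp [ht]) (by simp)]
  simp

lemma kraus_sandwich (D : ℕ) (c : Fin D → ℂ) (f : Fin D → Fin D) (j : Fin D) :
    krausOf D c f * Matrix.single j j 1 * (krausOf D c f)ᴴ
      = ((Complex.normSq (c j)) : ℂ) • Matrix.single (f j) (f j) 1 := by
  have h1 : krausOf D c f * Matrix.single j j 1
      = c j • Matrix.single (f j) j 1 := by
    unfold krausOf
    rw [Finset.sum_mul, Finset.sum_eq_single j
      (fun t _ ht => by rw [smul_mul_assoc, Matrix.single_mul_single_of_ne (h := ht), smul_zero])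
      (by simp)]
    rw [smul_mul_assoc, Matrix.single_mul_single_same, mul_one]
  have h2 : (krausOf D c f)ᴴ = ∑ t, star (c t) • Matrix.single t (f t) 1 := by
    unfold krausOf
    rw [conjTranspose_sum]
    exact Finset.sum_congr rfl fun t _ => by rw [conjTranspose_smul, stdBasis_conjT]
  rw [h1, h2, smul_mul_assoc, Finset.mul_sum]
  rw [Finset.sum_eq_single j
    (fun t _ ht => by
      rw [mul_smul_comm, Matrix.single_mul_single_of_ne (h := Ne.symm ht), smul_zero])
    (by simp)]
  rw [mul_smul_comm, Matrix.single_mul_single_same, mul_one, smul_smul]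
  congr 1
  rw [show star (c j) = (starRingEnd ℂ) (c j) from rfl, Complex.mul_conj]

lemma kraus_norm (D N : ℕ) (c : Fin N → Fin D → ℂ) (f : Fin N → Fin D → Fin D)
    (h : ∑ k, (krausOf D (c k) (f k))ᴴ * krausOf D (c k) (f k) = 1) (j : Fin D) :
    ∑ k, (Complex.normSq (c k j) : ℂ) = 1 := by
  have h2 : (∑ k, (krausOf D (c k) (f k))ᴴ * krausOf D (c k) (f k)) j j
      = (1 : Matrix (Fin D) (Fin D) ℂ) j j := by rw [h]
  rw [Matrix.one_apply_eq] at h2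
  rw [← h2, Matrix.sum_apply]
  refine Finset.sum_congr rfl fun k _ => ?_
  rw [Matrix.mul_apply]
  simp only [conjTranspose_apply, krausOf_apply]
  rw [Finset.sum_eq_single (f k j) (fun t _ ht => by simp [Ne.symm ht]) (by simp)]
  simp only [if_true]
  rw [Complex.normSq_eq_conj_mul_self]
  rfl

lemma kron_sum_right {n m : Type*} [Fintype n] [Fintype m] {ι : Type*} (s : Finset ι)
    (A : Matrix n n ℂ) (B : ι → Matrix m m ℂ) :
    A ⊗ₖ (∑ k ∈ s, B k) = ∑ k ∈ s, A ⊗ₖ B k := by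
  ext p q
  simp [Matrix.sum_apply, kroneckerMap_apply, Finset.mul_sum]

lemma kron_sum_left {n m : Type*} [Fintype n] [Fintype m] {ι : Type*} (s : Finset ι)
    (A : ι → Matrix n n ℂ) (B : Matrix m m ℂ) :
    (∑ k ∈ s, A k) ⊗ₖ B = ∑ k ∈ s, A k ⊗ₖ B := by
  ext p q
  simp [Matrix.sum_apply, kroneckerMap_apply, Finset.sum_mul]

lemma mapTensor_kron (DA DB : ℕ)
    (F : Matrix (Fin DA) (Fin DA) ℂ →ₗ[ℂ] Matrix (Fin DA) (Fin DA) ℂ)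
    (G : Matrix (Fin DB) (Fin DB) ℂ →ₗ[ℂ] Matrix (Fin DB) (Fin DB) ℂ)
    (A : Matrix (Fin DA) (Fin DA) ℂ) (B : Matrix (Fin DB) (Fin DB) ℂ) :
    mapTensor DA DB F G (A ⊗ₖ B) = F A ⊗ₖ G B := by
  have hFA : F A = ∑ a, ∑ a', A a a' • F (Matrix.single a a' 1) := by
    conv_lhs => rw [matrix_eq_sum_single A]
    rw [map_sum]
    refine Finset.sum_congr rfl fun a _ => ?_
    rw [map_sum]
    refine Finset.sum_congr rfl fun a' _ => ?_
    rw [show Matrix.single a a' (A a a') = A a a' • Matrix.single a a' 1 by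
      rw [smul_single, smul_eq_mul, mul_one], _root_.map_smul]
  have hGB : G B = ∑ b, ∑ b', B b b' • G (Matrix.single b b' 1) := by
    conv_lhs => rw [matrix_eq_sum_single B]
    rw [map_sum]
    refine Finset.sum_congr rfl fun b _ => ?_
    rw [map_sum]
    refine Finset.sum_congr rfl fun b' _ => ?_
    rw [show Matrix.single b b' (B b b') = B b b' • Matrix.single b b' 1 by
      rw [smul_single, smul_eq_mul, mul_one], _root_.map_smul]
  show (∑ x : (Fin DA × Fin DB) × (Fin DA × Fin DB),
      (A ⊗ₖ B) x.1 x.2 • (F (Matrix.single x.1.1 x.2.1 1) ⊗ₖ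
        G (Matrix.single x.1.2 x.2.2 1))) = F A ⊗ₖ G B
  ext p q
  rw [hFA, hGB]
  simp only [Matrix.sum_apply, Matrix.smul_apply, kroneckerMap_apply, smul_eq_mul,
    Fintype.sum_prod_type]
  rw [Finset.sum_mul_sum]
  refine Finset.sum_congr rfl fun a _ => ?_
  refine Finset.sum_congr rfl fun b _ => ?_
  rw [Finset.sum_mul_sum]
  refine Finset.sum_congr rfl fun a' _ => ?_
  refine Finset.sum_congr rfl fun b' _ => ?_
  ring

end AuxLemmas

/-- every one-way LQICC map `∑ i, E_i^A ⊗ Ẽ_i^B`, where `{E_i^A}` is a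
quantum instrument on `A` (each `E_i` completely positive, `∑ i E_i` trace-preserving)
and each `Ẽ_i^B` is an incoherent CPTP map on `B`, is QI-preserving. -/
theorem one_way_lqicc_qip (DA DB N : ℕ)
    (Einstr : Fin N → (Matrix (Fin DA) (Fin DA) ℂ →ₗ[ℂ] Matrix (Fin DA) (Fin DA) ℂ))
    (hCP : ∀ i, IsCompletelyPositive (Einstr i))
    (hTP : ∀ X : Matrix (Fin DA) (Fin DA) ℂ, ∑ i, ((Einstr i) X).trace = X.trace)
    (Et : Fin N → (Matrix (Fin DB) (Fin DB) ℂ →ₗ[ℂ] Matrix (Fin DB) (Fin DB) ℂ))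
    (hEt : ∀ i, IsIncoherentOp DB (Et i)) :
    ∀ σ, IsQI σ → IsQI (∑ i, mapTensor DA DB (Einstr i) (Et i) σ) := by
  intro σ hσ
  obtain ⟨p, ρ, hp, hp1, hρ, hσeq⟩ := hσ
  subst hσeq
  rcases Nat.eq_zero_or_pos DB with hDB0 | hDB
  · exfalso; subst hDB0; simpa using hp1
  rcases Nat.eq_zero_or_pos DA with hDA0 | hDA
  · exfalso; subst hDA0
    have := (hρ ⟨0, hDB⟩).2
    rw [Matrix.trace_eq_zero_of_isEmpty] at this
    exact one_ne_zero this.symm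
  choose Nk c f hnorm hG using hEt
  -- weights
  set w : (i : Fin N) → Fin (Nk i) → Fin DB → Fin DB → ℝ :=
    fun i k j m => if f i k j = m then p j * Complex.normSq (c i k j) else 0 with hwdef
  have hwnonneg : ∀ i k j m, 0 ≤ w i k j m := by
    intro i k j m
    dsimp [w]
    split_ifs
    · exact mul_nonneg (hp j) (Complex.normSq_nonneg _)
    · exact le_refl 0
  -- the target matrices
  set τ : Fin DB → Matrix (Fin DA) (Fin DA) ℂ := fun m =>
    ∑ i, ∑ j, ∑ k, ((w i k j m : ℝ) : ℂ) • (Einstr i) (ρ j) with hτdef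
  have hGi : ∀ (i : Fin N) (j : Fin DB), (Et i) (Matrix.single j j 1)
      = ∑ k, (Complex.normSq (c i k j) : ℂ) •
          Matrix.single (f i k j) (f i k j) 1 := by
    intro i j
    rw [hG i]
    exact Finset.sum_congr rfl fun k _ => kraus_sandwich _ _ _ _
  have keyi : ∀ i, mapTensor DA DB (Einstr i) (Et i)
      (∑ j, (p j : ℂ) • (ρ j ⊗ₖ Matrix.single j j 1))
      = ∑ j, ∑ k, ∑ m, ((w i k j m : ℝ) : ℂ) •
          ((Einstr i) (ρ j) ⊗ₖ Matrix.single m m 1) := by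
    intro i
    rw [map_sum]
    refine Finset.sum_congr rfl fun j _ => ?_
    rw [_root_.map_smul, mapTensor_kron, hGi i j, kron_sum_right, Finset.smul_sum]
    refine Finset.sum_congr rfl fun k _ => ?_
    rw [Matrix.kronecker_smul, smul_smul]
    rw [Finset.sum_eq_single (f i k j)
      (fun m _ hm => by
        rw [show w i k j m = 0 from if_neg (fun hh => hm hh.symm), Complex.ofReal_zero,
          zero_smul])
      (fun h => absurd (Finset.mem_univ _) h)]
    congr 1
    rw [show w i k j (f i k j) = p j * Complex.normSq (c i k j) from if_pos rfl]
    push_cast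
    ring
  have key : (∑ i, mapTensor DA DB (Einstr i) (Et i)
      (∑ j, (p j : ℂ) • (ρ j ⊗ₖ Matrix.single j j 1)))
      = ∑ m, τ m ⊗ₖ Matrix.single m m 1 := by
    have hR : ∀ m, τ m ⊗ₖ Matrix.single m m 1
        = ∑ i, ∑ j, ∑ k, ((w i k j m : ℝ) : ℂ) •
            ((Einstr i) (ρ j) ⊗ₖ Matrix.single m m 1) := by
      intro m
      rw [hτdef]
      rw [kron_sum_left]
      refine Finset.sum_congr rfl fun i _ => ?_
      rw [kron_sum_left]
      refine Finset.sum_congr rfl fun j _ => ?_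
      rw [kron_sum_left]
      refine Finset.sum_congr rfl fun k _ => ?_
      rw [Matrix.smul_kronecker]
    simp_rw [keyi, hR]
    conv_rhs => rw [Finset.sum_comm]
    refine Finset.sum_congr rfl fun i _ => ?_
    conv_rhs => rw [Finset.sum_comm]
    refine Finset.sum_congr rfl fun j _ => ?_
    rw [Finset.sum_comm]
  -- positivity of τ
  have hτpsd : ∀ m, (τ m).PosSemidef := by
    intro m
    refine psd_sum _ _ fun i _ => psd_sum _ _ fun j _ => psd_sum _ _ fun k _ => ?_
    exact psd_real_smul (cp_psd (hCP i) (hρ j).1) (hwnonneg i k j m)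
  -- traces
  set p' : Fin DB → ℝ := fun m => ((τ m).trace).re with hp'def
  have h0 : ∀ m, 0 ≤ (τ m).trace := fun m => psd_trace_nonneg (hτpsd m)
  have hp'nonneg : ∀ m, 0 ≤ p' m := fun m => (Complex.nonneg_iff.mp (h0 m)).1
  have htr_re : ∀ m, (τ m).trace = ((p' m : ℝ) : ℂ) := by
    intro m
    have h := (Complex.nonneg_iff.mp (h0 m)).2
    exact Complex.ext (by simp [p']) (by simp [h])
  have hwsum : ∀ i k j, (∑ m, ((w i k j m : ℝ) : ℂ))
      = (p j : ℂ) * (Complex.normSq (c i k j) : ℂ) := by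
    intro i k j
    rw [Finset.sum_eq_single (f i k j)
      (fun m _ hm => by rw [show w i k j m = 0 from if_neg (fun hh => hm hh.symm),
        Complex.ofReal_zero])
      (fun h => absurd (Finset.mem_univ _) h)]
    rw [show w i k j (f i k j) = p j * Complex.normSq (c i k j) from if_pos rfl]
    push_cast
    ring
  have hsum : ∑ m, (τ m).trace = 1 := by
    have htr : ∀ m, (τ m).trace = ∑ i, ∑ j, ∑ k,
        ((w i k j m : ℝ) : ℂ) * ((Einstr i) (ρ j)).trace := by
      intro m
      rw [hτdef]
      rw [Matrix.trace_sum]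
      refine Finset.sum_congr rfl fun i _ => ?_
      rw [Matrix.trace_sum]
      refine Finset.sum_congr rfl fun j _ => ?_
      rw [Matrix.trace_sum]
      exact Finset.sum_congr rfl fun k _ => by rw [Matrix.trace_smul, smul_eq_mul]
    simp_rw [htr]
    have hre : (∑ m : Fin DB, ∑ i, ∑ j, ∑ k,
        ((w i k j m : ℝ) : ℂ) * ((Einstr i) (ρ j)).trace)
        = ∑ i, ∑ j : Fin DB, (p j : ℂ) * ((Einstr i) (ρ j)).trace := by
      rw [Finset.sum_comm]
      refine Finset.sum_congr rfl fun i _ => ?_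
      rw [Finset.sum_comm]
      refine Finset.sum_congr rfl fun j _ => ?_
      rw [Finset.sum_comm]
      calc ∑ k, ∑ m, ((w i k j m : ℝ) : ℂ) * ((Einstr i) (ρ j)).trace
          = ∑ k, (∑ m, ((w i k j m : ℝ) : ℂ)) * ((Einstr i) (ρ j)).trace := by
            refine Finset.sum_congr rfl fun k _ => ?_
            rw [Finset.sum_mul]
        _ = ∑ k, (p j : ℂ) * ((Einstr i) (ρ j)).trace * (Complex.normSq (c i k j) : ℂ) := by
            refine Finset.sum_congr rfl fun k _ => ?_
            rw [hwsum]
            ring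
        _ = (p j : ℂ) * ((Einstr i) (ρ j)).trace * ∑ k, (Complex.normSq (c i k j) : ℂ) := by
            rw [← Finset.mul_sum]
        _ = (p j : ℂ) * ((Einstr i) (ρ j)).trace := by
            rw [kraus_norm DB (Nk i) (c i) (f i) (hnorm i) j, mul_one]
    rw [hre, Finset.sum_comm]
    calc ∑ j : Fin DB, ∑ i, (p j : ℂ) * ((Einstr i) (ρ j)).trace
        = ∑ j : Fin DB, (p j : ℂ) * ((ρ j)).trace := by
          refine Finset.sum_congr rfl fun j _ => ?_
          rw [← Finset.mul_sum, hTP]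
      _ = ∑ j : Fin DB, (p j : ℂ) := by
          refine Finset.sum_congr rfl fun j _ => ?_
          rw [(hρ j).2, mul_one]
      _ = 1 := by
          rw [← Complex.ofReal_sum]
          rw [hp1]
          simp
  have hp'sum : ∑ m, p' m = 1 := by
    have := congrArg Complex.re hsum
    rw [Complex.re_sum] at this
    simpa using this
  -- the output density matrices
  set ρ' : Fin DB → Matrix (Fin DA) (Fin DA) ℂ := fun m =>
    if p' m = 0 then (((DA : ℝ)⁻¹ : ℝ) : ℂ) • (1 : Matrix (Fin DA) (Fin DA) ℂ)
    else (((p' m)⁻¹ : ℝ) : ℂ) • τ m with hρ'def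
  have hρ'dens : ∀ m, IsDensity (ρ' m) := by
    intro m
    dsimp only [ρ']
    split_ifs with h
    · constructor
      · exact psd_real_smul Matrix.PosSemidef.one (by positivity)
      · rw [Matrix.trace_smul, Matrix.trace_one, smul_eq_mul]
        simp only [Fintype.card_fin]
        rw [Complex.ofReal_inv]
        push_cast
        field_simp
    · constructor
      · exact psd_real_smul (hτpsd m) (inv_nonneg.mpr (hp'nonneg m))
      · rw [Matrix.trace_smul, htr_re m, smul_eq_mul, ← Complex.ofReal_mul,
          inv_mul_cancel₀ h, Complex.ofReal_one]
  have hτeq : ∀ m, τ m = (p' m : ℂ) • ρ' m := by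
    intro m
    dsimp only [ρ']
    split_ifs with h
    · have hz : (τ m).trace = 0 := by rw [htr_re m, h, Complex.ofReal_zero]
      rw [psd_trace_zero (hτpsd m) hz, h]
      simp
    · rw [smul_smul, ← Complex.ofReal_mul, mul_inv_cancel₀ h, Complex.ofReal_one, one_smul]
  refine ⟨p', ρ', hp'nonneg, hp'sum, hρ'dens, ?_⟩
  rw [key]
  refine Finset.sum_congr rfl fun m _ => ?_
  rw [hτeq m, Matrix.smul_kronecker]
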